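/- arXiv:0907.0907 — 2 statements merged into one kernel-verified Lean document; each statement's English description precedes it below -/
import Mathlib

section
/- (Sandwich property of tiles.) Let X ⊆ S ⊆ P ⊆ U be finite sets and let f ⊆ U. If f is a tile of QT(X) and f is a tile of QT(P), then f is a tile of QT(S). -/
/-- The unit square `U = [0,1) × [0,1)`. -/
def unitSq : Set (ℝ × ℝ) := Set.Ico (0 : ℝ) 1 ×ˢ Set.Ico (0 : ℝ) 1

/-- The square `[i/2^k, (i+1)/2^k) × [j/2^k, (j+1)/2^k)`. -/
def canSq (k : ℕ) (i j : ℤ) : Set (ℝ × ℝ) :=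
  Set.Ico ((i : ℝ) / 2 ^ k) (((i : ℝ) + 1) / 2 ^ k) ×ˢ
    Set.Ico ((j : ℝ) / 2 ^ k) (((j : ℝ) + 1) / 2 ^ k)

/-- `σ` is a canonical square of side length `2⁻ᵏ`: it has the form
`[i/2^k, (i+1)/2^k) × [j/2^k, (j+1)/2^k)` with `0 ≤ i, j < 2^k`
(so it is contained in the unit square). -/
def IsCanSqSide (k : ℕ) (σ : Set (ℝ × ℝ)) : Prop :=
  ∃ i j : ℤ, 0 ≤ i ∧ i < 2 ^ k ∧ 0 ≤ j ∧ j < 2 ^ k ∧ σ = canSq k i j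

/-- `σ` is a canonical square. -/
def IsCanSq (σ : Set (ℝ × ℝ)) : Prop := ∃ k : ℕ, IsCanSqSide k σ

/-- `q` is one of the four quadrants of the canonical square `σ`: if `σ` has side
length `2⁻ᵏ`, the quadrants are the canonical squares of side length `2⁻⁽ᵏ⁺¹⁾`
contained in `σ`. -/
def IsQuadrantOf (q σ : Set (ℝ × ℝ)) : Prop :=
  ∃ k : ℕ, IsCanSqSide k σ ∧ IsCanSqSide (k + 1) q ∧ q ⊆ σ

/-- `σ` is the smallest canonical square containing `S`: it is a canonical square,
it contains `S`, and it is contained in every canonical square containing `S`. -/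
def IsSmallestCanSq (S σ : Set (ℝ × ℝ)) : Prop :=
  IsCanSq σ ∧ S ⊆ σ ∧ ∀ τ : Set (ℝ × ℝ), IsCanSq τ → S ⊆ τ → σ ⊆ τ

open scoped Classical

/-- `smallestCanSq S`: the smallest canonical square containing `S` (junk value `∅` if none exists). -/
noncomputable def smallestCanSq (S : Set (ℝ × ℝ)) : Set (ℝ × ℝ) :=
  if h : ∃ σ : Set (ℝ × ℝ), IsSmallestCanSq S σ then h.choose else ∅

/-- A canonical square `σ` is critical for `P` if at least two of its four
quadrants contain a point of `P`. -/
def Critical (P σ : Set (ℝ × ℝ)) : Prop :=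
  IsCanSq σ ∧ ∃ q₁ q₂ : Set (ℝ × ℝ), IsQuadrantOf q₁ σ ∧ IsQuadrantOf q₂ σ ∧
    q₁ ≠ q₂ ∧ (P ∩ q₁).Nonempty ∧ (P ∩ q₂).Nonempty

/-- The tiles of the compressed quadtree map `QT(P)`: (i) `U` itself if `|P| ≤ 1`;
(ii) the annulus `U \ sq(P)` if `|P| ≥ 2` and `sq(P) ≠ U`; (iii) for every
canonical square `σ` critical for `P` and every quadrant `q` of `σ`: the square
`q` if `|P ∩ q| ≤ 1`, and the annulus `q \ sq(P ∩ q)` if `|P ∩ q| ≥ 2` and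
`sq(P ∩ q) ≠ q`. -/
noncomputable def QT (P : Set (ℝ × ℝ)) : Set (Set (ℝ × ℝ)) :=
  {f | (P.ncard ≤ 1 ∧ f = unitSq)
    ∨ (2 ≤ P.ncard ∧ smallestCanSq P ≠ unitSq ∧ f = unitSq \ smallestCanSq P)
    ∨ (∃ σ q : Set (ℝ × ℝ), Critical P σ ∧ IsQuadrantOf q σ ∧
        (((P ∩ q).ncard ≤ 1 ∧ f = q)
          ∨ (2 ≤ (P ∩ q).ncard ∧ smallestCanSq (P ∩ q) ≠ q ∧ f = q \ smallestCanSq (P ∩ q))))}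

/-! ### Auxiliary development -/

/-- The 1-dimensional dyadic interval `[i/2^k, (i+1)/2^k)`. -/
def dI (k : ℕ) (i : ℤ) : Set ℝ := Set.Ico ((i : ℝ) / 2 ^ k) (((i : ℝ) + 1) / 2 ^ k)

lemma two_pow_pos (k : ℕ) : (0 : ℝ) < 2 ^ k := by positivity

lemma mem_dI {k : ℕ} {i : ℤ} {x : ℝ} :
    x ∈ dI k i ↔ (i : ℝ) ≤ x * 2 ^ k ∧ x * 2 ^ k < (i : ℝ) + 1 := by
  unfold dI
  rw [Set.mem_Ico, div_le_iff₀ (two_pow_pos k), lt_div_iff₀ (two_pow_pos k)]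

lemma dI_index_eq {k : ℕ} {i i' : ℤ} {x : ℝ} (h : x ∈ dI k i) (h' : x ∈ dI k i') : i = i' := by
  rw [mem_dI] at h h'
  have h1 : (i : ℝ) < (i' : ℝ) + 1 := lt_of_le_of_lt h.1 h'.2
  have h2 : (i' : ℝ) < (i : ℝ) + 1 := lt_of_le_of_lt h'.1 h.2
  have h1' : i < i' + 1 := by exact_mod_cast h1
  have h2' : i' < i + 1 := by exact_mod_cast h2
  omega

lemma dI_dist {k : ℕ} {i : ℤ} {x x' : ℝ} (h : x ∈ dI k i) (h' : x' ∈ dI k i) :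
    (x' - x) * 2 ^ k < 1 := by
  rw [mem_dI] at h h'
  nlinarith [h.1, h'.2]

lemma corner_mem_dI (k : ℕ) (i : ℤ) : (i : ℝ) / 2 ^ k ∈ dI k i := by
  rw [mem_dI, div_mul_cancel₀ _ (ne_of_gt (two_pow_pos k))]
  exact ⟨le_refl _, by linarith⟩

lemma offset_mem_dI {k : ℕ} {i e : ℤ} (h0 : 0 ≤ e) (h1 : e ≤ 1) :
    ((2 * i + e : ℤ) : ℝ) / 2 ^ (k + 1) ∈ dI k i := by
  rw [mem_dI]
  have hx : ((2 * i + e : ℤ) : ℝ) / 2 ^ (k + 1) * 2 ^ k = ((2 * i + e : ℤ) : ℝ) / 2 := by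
    rw [pow_succ]
    field_simp
  rw [hx]
  have he0 : (0 : ℝ) ≤ (e : ℝ) := by exact_mod_cast h0
  have he1 : (e : ℝ) ≤ 1 := by exact_mod_cast h1
  push_cast
  constructor <;> [skip; skip] <;> nlinarith

lemma dI_level_le {k m : ℕ} {i a : ℤ} (h : dI m a ⊆ dI k i) : k ≤ m := by
  have p0 := h (offset_mem_dI (k := m) (i := a) (e := 0) le_rfl zero_le_one)
  have p1 := h (offset_mem_dI (k := m) (i := a) (e := 1) zero_le_one le_rfl)
  have hd := dI_dist p0 p1
  have hdiff : ((2 * a + 1 : ℤ) : ℝ) / 2 ^ (m + 1) - ((2 * a + 0 : ℤ) : ℝ) / 2 ^ (m + 1)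
      = 1 / 2 ^ (m + 1) := by
    push_cast; ring
  rw [hdiff, one_div_mul_eq_div, div_lt_one (two_pow_pos (m + 1))] at hd
  have := (pow_lt_pow_iff_right₀ (one_lt_two (α := ℝ))).1 hd
  omega

lemma dI_subset_ediv (k t : ℕ) (j : ℤ) : dI (k + t) j ⊆ dI k (j / 2 ^ t) := by
  intro x hx
  rw [mem_dI] at hx ⊢
  set q : ℤ := j / 2 ^ t with hq
  have h2t : (0 : ℤ) < 2 ^ t := by positivity
  have hub : q * 2 ^ t ≤ j := Int.ediv_mul_le j (ne_of_gt h2t)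
  have hub2 : j < (q + 1) * 2 ^ t := Int.lt_ediv_add_one_mul_self j h2t
  have hpow : (2 : ℝ) ^ (k + t) = 2 ^ k * 2 ^ t := by rw [pow_add]
  have hx1 : (j : ℝ) ≤ x * 2 ^ k * 2 ^ t := by
    have := hx.1; rw [hpow] at this; linarith [this, mul_assoc x ((2:ℝ)^k) ((2:ℝ)^t)]
  have hx2 : x * 2 ^ k * 2 ^ t < (j : ℝ) + 1 := by
    have := hx.2; rw [hpow] at this; linarith [this, mul_assoc x ((2:ℝ)^k) ((2:ℝ)^t)]
  have hubR : (q : ℝ) * 2 ^ t ≤ (j : ℝ) := by exact_mod_cast hub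
  have hub2R : (j : ℝ) + 1 ≤ ((q : ℝ) + 1) * 2 ^ t := by
    have : (j + 1 : ℤ) ≤ (q + 1) * 2 ^ t := hub2
    exact_mod_cast this
  constructor
  · have h3 : (q : ℝ) * 2 ^ t ≤ x * 2 ^ k * 2 ^ t := le_trans hubR hx1
    exact le_of_mul_le_mul_right h3 (two_pow_pos t)
  · have h3 : x * 2 ^ k * 2 ^ t < ((q : ℝ) + 1) * 2 ^ t := lt_of_lt_of_le hx2 hub2R
    exact lt_of_mul_lt_mul_right h3 (le_of_lt (two_pow_pos t))

lemma dI_laminar {k m : ℕ} {i a : ℤ} (hkm : k ≤ m) {x : ℝ}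
    (hx : x ∈ dI k i) (hx' : x ∈ dI m a) : dI m a ⊆ dI k i := by
  obtain ⟨t, rfl⟩ := Nat.exists_eq_add_of_le hkm
  have hsub := dI_subset_ediv k t a
  have hi : i = a / 2 ^ t := dI_index_eq hx (hsub hx')
  rw [hi]
  exact hsub

/-! ### 2-dimensional lemmas -/

lemma mem_canSq {k : ℕ} {i j : ℤ} {p : ℝ × ℝ} :
    p ∈ canSq k i j ↔ p.1 ∈ dI k i ∧ p.2 ∈ dI k j := Iff.rfl

/-- The corner of a canonical square. -/
noncomputable def corner (k : ℕ) (i j : ℤ) : ℝ × ℝ := ((i : ℝ) / 2 ^ k, (j : ℝ) / 2 ^ k)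

lemma corner_mem (k : ℕ) (i j : ℤ) : corner k i j ∈ canSq k i j :=
  mem_canSq.2 ⟨corner_mem_dI k i, corner_mem_dI k j⟩

lemma canSq_nonempty (k : ℕ) (i j : ℤ) : (canSq k i j).Nonempty := ⟨_, corner_mem k i j⟩

lemma canSq_laminar {k m : ℕ} {i j a b : ℤ} (hkm : k ≤ m) {p : ℝ × ℝ}
    (hp : p ∈ canSq k i j) (hp' : p ∈ canSq m a b) : canSq m a b ⊆ canSq k i j := by
  intro x hx
  rw [mem_canSq] at hp hp' hx ⊢
  exact ⟨dI_laminar hkm hp.1 hp'.1 hx.1, dI_laminar hkm hp.2 hp'.2 hx.2⟩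

lemma canSq_level_le {k m : ℕ} {i j a b : ℤ} (h : canSq m a b ⊆ canSq k i j) : k ≤ m := by
  apply dI_level_le (k := k) (m := m) (i := i) (a := a)
  intro x hx
  have hmem : ((x, (b : ℝ) / 2 ^ m) : ℝ × ℝ) ∈ canSq m a b :=
    mem_canSq.2 ⟨hx, corner_mem_dI m b⟩
  exact (mem_canSq.1 (h hmem)).1

lemma canSq_index_eq {k : ℕ} {i j a b : ℤ} {p : ℝ × ℝ}
    (hp : p ∈ canSq k i j) (hp' : p ∈ canSq k a b) : i = a ∧ j = b :=
  ⟨dI_index_eq (mem_canSq.1 hp).1 (mem_canSq.1 hp').1,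
   dI_index_eq (mem_canSq.1 hp).2 (mem_canSq.1 hp').2⟩

lemma IsCanSqSide.nonempty {k : ℕ} {σ : Set (ℝ × ℝ)} (h : IsCanSqSide k σ) : σ.Nonempty := by
  obtain ⟨i, j, -, -, -, -, rfl⟩ := h
  exact canSq_nonempty k i j

lemma IsCanSqSide.level_unique {k m : ℕ} {σ : Set (ℝ × ℝ)}
    (h : IsCanSqSide k σ) (h' : IsCanSqSide m σ) : k = m := by
  obtain ⟨i, j, -, -, -, -, rfl⟩ := h
  obtain ⟨a, b, -, -, -, -, hσ⟩ := h'
  exact le_antisymm (canSq_level_le hσ.ge) (canSq_level_le hσ.le)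

lemma dI_subset_unit {k : ℕ} {i : ℤ} (h0 : 0 ≤ i) (h1 : i < 2 ^ k) :
    dI k i ⊆ Set.Ico (0 : ℝ) 1 := by
  intro x hx
  rw [mem_dI] at hx
  have h0R : (0 : ℝ) ≤ (i : ℝ) := by exact_mod_cast h0
  have h1R : (i : ℝ) + 1 ≤ 2 ^ k := by
    have : i + 1 ≤ (2 : ℤ) ^ k := h1
    push_cast at this ⊢
    exact_mod_cast this
  constructor
  · nlinarith [two_pow_pos k, hx.1]
  · nlinarith [two_pow_pos k, hx.2]

lemma IsCanSqSide.subset_unitSq {k : ℕ} {σ : Set (ℝ × ℝ)} (h : IsCanSqSide k σ) :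
    σ ⊆ unitSq := by
  obtain ⟨i, j, h0, h1, h2, h3, rfl⟩ := h
  intro p hp
  rw [mem_canSq] at hp
  exact ⟨dI_subset_unit h0 h1 hp.1, dI_subset_unit h2 h3 hp.2⟩

lemma IsCanSq.subset_unitSq {σ : Set (ℝ × ℝ)} (h : IsCanSq σ) : σ ⊆ unitSq := by
  obtain ⟨k, hk⟩ := h; exact hk.subset_unitSq

lemma unitSq_eq : unitSq = canSq 0 0 0 := by
  unfold unitSq canSq
  norm_num

lemma isCanSqSide_unitSq : IsCanSqSide 0 unitSq :=
  ⟨0, 0, le_refl _, by norm_num, le_refl _, by norm_num, unitSq_eq⟩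

/-! ### The square at a point -/

/-- The canonical square of level `k` containing the point `p`. -/
noncomputable def sqAt (k : ℕ) (p : ℝ × ℝ) : Set (ℝ × ℝ) :=
  canSq k ⌊p.1 * 2 ^ k⌋ ⌊p.2 * 2 ^ k⌋

lemma mem_sqAt (k : ℕ) (p : ℝ × ℝ) : p ∈ sqAt k p :=
  mem_canSq.2 ⟨mem_dI.2 ⟨Int.floor_le _, Int.lt_floor_add_one _⟩,
    mem_dI.2 ⟨Int.floor_le _, Int.lt_floor_add_one _⟩⟩

lemma sqAt_isCanSqSide {p : ℝ × ℝ} (hp : p ∈ unitSq) (k : ℕ) : IsCanSqSide k (sqAt k p) := by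
  obtain ⟨⟨h1, h2⟩, h3, h4⟩ := hp
  refine ⟨_, _, ?_, ?_, ?_, ?_, rfl⟩
  · exact Int.floor_nonneg.2 (by positivity)
  · rw [Int.floor_lt]; push_cast; nlinarith [two_pow_pos k]
  · exact Int.floor_nonneg.2 (by positivity)
  · rw [Int.floor_lt]; push_cast; nlinarith [two_pow_pos k]

lemma IsCanSqSide.eq_sqAt {k : ℕ} {σ : Set (ℝ × ℝ)} {p : ℝ × ℝ}
    (h : IsCanSqSide k σ) (hp : p ∈ σ) : σ = sqAt k p := by
  obtain ⟨i, j, -, -, -, -, rfl⟩ := h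
  obtain ⟨hi, hj⟩ := canSq_index_eq hp (mem_sqAt k p)
  rw [sqAt, ← hi, ← hj]

lemma sqAt_anti {k m : ℕ} (h : k ≤ m) (p : ℝ × ℝ) : sqAt m p ⊆ sqAt k p :=
  canSq_laminar h (mem_sqAt k p) (mem_sqAt m p)

lemma side_laminar {k m : ℕ} {σ τ : Set (ℝ × ℝ)} (hσ : IsCanSqSide k σ)
    (hτ : IsCanSqSide m τ) (hkm : k ≤ m) {p : ℝ × ℝ} (hp : p ∈ σ) (hp' : p ∈ τ) : τ ⊆ σ := by
  obtain ⟨i, j, -, -, -, -, rfl⟩ := hσ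
  obtain ⟨a, b, -, -, -, -, rfl⟩ := hτ
  exact canSq_laminar hkm hp hp'

/-! ### Annulus lemmas -/

lemma annulus_subset_can {k m l : ℕ} {i j a b u v : ℤ}
    (hsub : canSq m a b ⊆ canSq k i j) (hne : canSq m a b ≠ canSq k i j)
    (h : canSq k i j \ canSq m a b ⊆ canSq l u v) : canSq k i j ⊆ canSq l u v := by
  have hkm : k ≤ m := canSq_level_le hsub
  have hkm' : k + 1 ≤ m := by
    rcases Nat.lt_or_ge k m with h' | h'
    · omega
    · exfalso
      have hkmEq : k = m := le_antisymm hkm h'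
      subst hkmEq
      obtain ⟨hia, hjb⟩ := canSq_index_eq (hsub (corner_mem k a b)) (corner_mem k a b)
      exact hne (by rw [hia, hjb])
  set c : ℝ × ℝ := corner m a b with hc
  have hcτ : c ∈ canSq m a b := corner_mem m a b
  have hcρ : c ∈ canSq k i j := hsub hcτ
  have hτQ : canSq m a b ⊆ sqAt (k + 1) c :=
    canSq_laminar hkm' (mem_sqAt (k + 1) c) hcτ
  -- the four corner points of the quadrants of `canSq k i j`
  set P : ℤ → ℤ → ℝ × ℝ := fun e g =>
    (((2 * i + e : ℤ) : ℝ) / 2 ^ (k + 1), ((2 * j + g : ℤ) : ℝ) / 2 ^ (k + 1)) with hP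
  have hPρ : ∀ e g : ℤ, 0 ≤ e → e ≤ 1 → 0 ≤ g → g ≤ 1 → P e g ∈ canSq k i j :=
    fun e g h0 h1 h2 h3 => mem_canSq.2 ⟨offset_mem_dI h0 h1, offset_mem_dI h2 h3⟩
  have hPQ : ∀ e g : ℤ, P e g ∈ sqAt (k + 1) c →
      ⌊c.1 * 2 ^ (k + 1)⌋ = 2 * i + e ∧ ⌊c.2 * 2 ^ (k + 1)⌋ = 2 * j + g := by
    intro e g hm
    rw [sqAt, mem_canSq, mem_dI, mem_dI] at hm
    have hx : (P e g).1 * 2 ^ (k + 1) = ((2 * i + e : ℤ) : ℝ) :=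
      div_mul_cancel₀ _ (ne_of_gt (two_pow_pos (k + 1)))
    have hy : (P e g).2 * 2 ^ (k + 1) = ((2 * j + g : ℤ) : ℝ) :=
      div_mul_cancel₀ _ (ne_of_gt (two_pow_pos (k + 1)))
    rw [hx, hy] at hm
    constructor
    · have h1 : (⌊c.1 * 2 ^ (k + 1)⌋ : ℝ) ≤ ((2 * i + e : ℤ) : ℝ) := hm.1.1
      have h2 : ((2 * i + e : ℤ) : ℝ) < (⌊c.1 * 2 ^ (k + 1)⌋ : ℝ) + 1 := hm.1.2
      have h1' : ⌊c.1 * 2 ^ (k + 1)⌋ ≤ 2 * i + e := by exact_mod_cast h1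
      have h2' : 2 * i + e < ⌊c.1 * 2 ^ (k + 1)⌋ + 1 := by exact_mod_cast h2
      omega
    · have h1 : (⌊c.2 * 2 ^ (k + 1)⌋ : ℝ) ≤ ((2 * j + g : ℤ) : ℝ) := hm.2.1
      have h2 : ((2 * j + g : ℤ) : ℝ) < (⌊c.2 * 2 ^ (k + 1)⌋ : ℝ) + 1 := hm.2.2
      have h1' : ⌊c.2 * 2 ^ (k + 1)⌋ ≤ 2 * j + g := by exact_mod_cast h1
      have h2' : 2 * j + g < ⌊c.2 * 2 ^ (k + 1)⌋ + 1 := by exact_mod_cast h2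
      omega
  have key : ∃ g : ℤ, 0 ≤ g ∧ g ≤ 1 ∧ P 0 g ∉ sqAt (k + 1) c ∧ P 1 g ∉ sqAt (k + 1) c := by
    by_cases h0 : P 0 0 ∈ sqAt (k + 1) c ∨ P 1 0 ∈ sqAt (k + 1) c
    · refine ⟨1, zero_le_one, le_refl _, ?_, ?_⟩ <;> intro hmem
      · rcases h0 with h0 | h0
        · have e1 := hPQ 0 0 h0; have e2 := hPQ 0 1 hmem; omega
        · have e1 := hPQ 1 0 h0; have e2 := hPQ 0 1 hmem; omega
      · rcases h0 with h0 | h0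
        · have e1 := hPQ 0 0 h0; have e2 := hPQ 1 1 hmem; omega
        · have e1 := hPQ 1 0 h0; have e2 := hPQ 1 1 hmem; omega
    · push_neg at h0
      exact ⟨0, le_refl _, zero_le_one, h0.1, h0.2⟩
  obtain ⟨g, hg0, hg1, hn0, hn1⟩ := key
  have m0 : P 0 g ∈ canSq l u v :=
    h ⟨hPρ 0 g le_rfl zero_le_one hg0 hg1, fun hh => hn0 (hτQ hh)⟩
  have m1 : P 1 g ∈ canSq l u v :=
    h ⟨hPρ 1 g zero_le_one le_rfl hg0 hg1, fun hh => hn1 (hτQ hh)⟩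
  have hd := dI_dist (mem_canSq.1 m0).1 (mem_canSq.1 m1).1
  have hdiff : (P 1 g).1 - (P 0 g).1 = 1 / 2 ^ (k + 1) := by
    simp only [hP]
    push_cast
    ring
  rw [hdiff, one_div_mul_eq_div, div_lt_one (two_pow_pos (k + 1))] at hd
  have hl : l ≤ k := by
    have := (pow_lt_pow_iff_right₀ (one_lt_two (α := ℝ))).1 hd
    omega
  exact canSq_laminar hl m0 (hPρ 0 g le_rfl zero_le_one hg0 hg1)

lemma annulus_subset {k m l : ℕ} {ρ τ σ : Set (ℝ × ℝ)}
    (hρ : IsCanSqSide k ρ) (hτ : IsCanSqSide m τ) (hτρ : τ ⊆ ρ) (hne : τ ≠ ρ)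
    (hσ : IsCanSqSide l σ) (h : ρ \ τ ⊆ σ) : ρ ⊆ σ := by
  obtain ⟨i, j, -, -, -, -, rfl⟩ := hρ
  obtain ⟨a, b, -, -, -, -, rfl⟩ := hτ
  obtain ⟨u, v, -, -, -, -, rfl⟩ := hσ
  exact annulus_subset_can hτρ hne h

lemma annulus_ne_can {k m l : ℕ} {ρ τ σ : Set (ℝ × ℝ)}
    (hρ : IsCanSqSide k ρ) (hτ : IsCanSqSide m τ) (hτρ : τ ⊆ ρ) (hne : τ ≠ ρ)
    (hσ : IsCanSqSide l σ) (h : ρ \ τ = σ) : False := by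
  have h1 : ρ ⊆ σ := annulus_subset hρ hτ hτρ hne hσ h.subset
  obtain ⟨x, hx⟩ := hτ.nonempty
  have hxσ : x ∈ σ := h1 (hτρ hx)
  rw [← h] at hxσ
  exact hxσ.2 hx

lemma annulus_inj {k m k' m' : ℕ} {ρ τ ρ' τ' : Set (ℝ × ℝ)}
    (hρ : IsCanSqSide k ρ) (hτ : IsCanSqSide m τ) (hτρ : τ ⊆ ρ) (hne : τ ≠ ρ)
    (hρ' : IsCanSqSide k' ρ') (hτ' : IsCanSqSide m' τ') (hτρ' : τ' ⊆ ρ') (hne' : τ' ≠ ρ')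
    (h : ρ \ τ = ρ' \ τ') : ρ = ρ' ∧ τ = τ' := by
  have h1 : ρ ⊆ ρ' := annulus_subset hρ hτ hτρ hne hρ' (h ▸ Set.diff_subset)
  have h2 : ρ' ⊆ ρ := annulus_subset hρ' hτ' hτρ' hne' hρ (h ▸ Set.diff_subset)
  have hρρ : ρ = ρ' := Set.Subset.antisymm h1 h2
  refine ⟨hρρ, ?_⟩
  calc τ = ρ \ (ρ \ τ) := (Set.diff_diff_cancel_left hτρ).symm
    _ = ρ' \ (ρ' \ τ') := by rw [h, hρρ]
    _ = τ' := Set.diff_diff_cancel_left hτρ'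

/-! ### Smallest canonical square -/

lemma sqAt_zero {p : ℝ × ℝ} (hp : p ∈ unitSq) : sqAt 0 p = unitSq := by
  obtain ⟨⟨h1, h2⟩, h3, h4⟩ := hp
  have e1 : ⌊p.1 * 2 ^ 0⌋ = 0 := by
    rw [pow_zero, mul_one, Int.floor_eq_zero_iff]
    exact ⟨h1, h2⟩
  have e2 : ⌊p.2 * 2 ^ 0⌋ = 0 := by
    rw [pow_zero, mul_one, Int.floor_eq_zero_iff]
    exact ⟨h3, h4⟩
  rw [sqAt, e1, e2, ← unitSq_eq]

lemma exists_smallest {T : Set (ℝ × ℝ)} (hU : T ⊆ unitSq) {a b : ℝ × ℝ}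
    (ha : a ∈ T) (hb : b ∈ T) (hab : a ≠ b) : ∃ σ, IsSmallestCanSq T σ := by
  have hbdd : ∃ n : ℕ, ¬ T ⊆ sqAt n a := by
    have hcoord : a.1 ≠ b.1 ∨ a.2 ≠ b.2 := by
      by_contra hcon
      push_neg at hcon
      exact hab (Prod.ext hcon.1 hcon.2)
    rcases hcoord with hd | hd
    · have hpos : 0 < |a.1 - b.1| := abs_pos.2 (sub_ne_zero.2 hd)
      obtain ⟨n, hn⟩ := pow_unbounded_of_one_lt (1 / |a.1 - b.1|) (one_lt_two (α := ℝ))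
      refine ⟨n, fun hsub => ?_⟩
      have hbn := hsub hb
      have han := mem_sqAt n a
      have h1 := dI_dist (mem_canSq.1 han).1 (mem_canSq.1 hbn).1
      have h2 := dI_dist (mem_canSq.1 hbn).1 (mem_canSq.1 han).1
      have hgt : 1 < |a.1 - b.1| * 2 ^ n := by
        rw [div_lt_iff₀ hpos] at hn
        nlinarith
      rcases abs_cases (a.1 - b.1) with ⟨he, -⟩ | ⟨he, -⟩ <;> rw [he] at hgt <;> nlinarith
    · have hpos : 0 < |a.2 - b.2| := abs_pos.2 (sub_ne_zero.2 hd)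
      obtain ⟨n, hn⟩ := pow_unbounded_of_one_lt (1 / |a.2 - b.2|) (one_lt_two (α := ℝ))
      refine ⟨n, fun hsub => ?_⟩
      have hbn := hsub hb
      have han := mem_sqAt n a
      have h1 := dI_dist (mem_canSq.1 han).2 (mem_canSq.1 hbn).2
      have h2 := dI_dist (mem_canSq.1 hbn).2 (mem_canSq.1 han).2
      have hgt : 1 < |a.2 - b.2| * 2 ^ n := by
        rw [div_lt_iff₀ hpos] at hn
        nlinarith
      rcases abs_cases (a.2 - b.2) with ⟨he, -⟩ | ⟨he, -⟩ <;> rw [he] at hgt <;> nlinarith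
  set n := Nat.find hbdd with hn
  have hspec : ¬ T ⊆ sqAt n a := Nat.find_spec hbdd
  have hn0 : n ≠ 0 := by
    intro h0
    apply hspec
    rw [h0, sqAt_zero (hU ha)]
    exact hU
  have hlt : ∀ m < n, T ⊆ sqAt m a := fun m hm => not_not.1 (Nat.find_min hbdd hm)
  refine ⟨sqAt (n - 1) a, ⟨n - 1, sqAt_isCanSqSide (hU ha) (n - 1)⟩,
    hlt _ (by omega), ?_⟩
  rintro τ ⟨m, hτ⟩ hTτ
  have hτ' : τ = sqAt m a := hτ.eq_sqAt (hTτ ha)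
  have hm : m < n := by
    by_contra hcon
    push_neg at hcon
    exact hspec ((hτ' ▸ hTτ).trans (sqAt_anti hcon a))
  rw [hτ']
  exact sqAt_anti (by omega) a

lemma smallestCanSq_spec {T : Set (ℝ × ℝ)} (hfin : T.Finite) (hU : T ⊆ unitSq)
    (h2 : 2 ≤ T.ncard) : IsSmallestCanSq T (smallestCanSq T) := by
  obtain ⟨a, b, ha, hb, hab⟩ := (Set.one_lt_ncard_iff hfin).1 h2
  have hex := exists_smallest hU ha hb hab
  rw [smallestCanSq, dif_pos hex]
  exact hex.choose_spec

lemma IsSmallestCanSq.unique {T σ σ' : Set (ℝ × ℝ)} (h : IsSmallestCanSq T σ)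
    (h' : IsSmallestCanSq T σ') : σ = σ' :=
  Set.Subset.antisymm (h.2.2 _ h'.1 h'.2.1) (h'.2.2 _ h.1 h.2.1)

/-! ### Quadrants and criticality -/

lemma IsQuadrantOf.ne_unitSq {q σ : Set (ℝ × ℝ)} (h : IsQuadrantOf q σ) : q ≠ unitSq := by
  obtain ⟨k, -, hq, -⟩ := h
  intro he
  have := hq.level_unique (he ▸ isCanSqSide_unitSq)
  omega

lemma IsQuadrantOf.sigma_unique {q σ σ' : Set (ℝ × ℝ)} (h : IsQuadrantOf q σ)
    (h' : IsQuadrantOf q σ') : σ = σ' := by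
  obtain ⟨k, hσ, hq, hsub⟩ := h
  obtain ⟨k', hσ', hq', hsub'⟩ := h'
  have hkk : k = k' := by
    have := hq.level_unique hq'
    omega
  subst hkk
  obtain ⟨p, hp⟩ := hq.nonempty
  exact Set.Subset.antisymm (side_laminar hσ' hσ le_rfl (hsub' hp) (hsub hp))
    (side_laminar hσ hσ' le_rfl (hsub hp) (hsub' hp))

lemma Critical.mono {X S σ : Set (ℝ × ℝ)} (h : Critical X σ) (hXS : X ⊆ S) : Critical S σ := by
  obtain ⟨hc, q₁, q₂, h1, h2, h3, ⟨x1, hx1⟩, ⟨x2, hx2⟩⟩ := h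
  exact ⟨hc, q₁, q₂, h1, h2, h3, ⟨x1, hXS hx1.1, hx1.2⟩, ⟨x2, hXS hx2.1, hx2.2⟩⟩

/-- Sandwich property of tiles: if `X ⊆ S ⊆ P ⊆ U` are finite and `f` is a tile
of both `QT(X)` and `QT(P)`, then `f` is a tile of `QT(S)`. -/
theorem QT_sandwich (X S P : Set (ℝ × ℝ)) (hPfin : P.Finite) (hPU : P ⊆ unitSq)
    (hXS : X ⊆ S) (hSP : S ⊆ P) (f : Set (ℝ × ℝ))
    (hfX : f ∈ QT X) (hfP : f ∈ QT P) :
    f ∈ QT S := by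
  have hXP : X ⊆ P := hXS.trans hSP
  have hSfin : S.Finite := hPfin.subset hSP
  have hXfin : X.Finite := hPfin.subset hXP
  have hSU : S ⊆ unitSq := hSP.trans hPU
  have hXU : X ⊆ unitSq := hXP.trans hPU
  rcases hfP with ⟨hP1, rfl⟩ | ⟨hP2, hPne, rfl⟩ | ⟨σ, q, hcrit, hquad, hcase⟩
  · -- Case P(i): |P| ≤ 1
    exact Or.inl ⟨(Set.ncard_le_ncard hSP hPfin).trans hP1, rfl⟩
  · -- Case P(ii): f = U \ sq(P)
    have specP := smallestCanSq_spec hPfin hPU hP2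
    have hPnonempty : P.Nonempty := by
      rcases P.eq_empty_or_nonempty with hE | hN
      · rw [hE, Set.ncard_empty] at hP2; omega
      · exact hN
    rcases hfX with ⟨hX1, hfU⟩ | ⟨hX2, hXne, hfU⟩ | ⟨σ', q', hcritX, hquadX, hcaseX⟩
    · -- X(i): U \ sq(P) = U, impossible
      exfalso
      obtain ⟨x, hx⟩ := hPnonempty
      have hxsq : x ∈ smallestCanSq P := specP.2.1 hx
      have hxU : x ∈ unitSq := hPU hx
      rw [← hfU] at hxU
      exact hxU.2 hxsq
    · -- X(ii): sq X = sq P, squeeze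
      have specX := smallestCanSq_spec hXfin hXU hX2
      have hXS2 : 2 ≤ S.ncard := hX2.trans (Set.ncard_le_ncard hXS hSfin)
      have specS := smallestCanSq_spec hSfin hSU hXS2
      have hsqXP : smallestCanSq X = smallestCanSq P := by
        have h1 : unitSq \ (unitSq \ smallestCanSq X) = smallestCanSq X :=
          Set.diff_diff_cancel_left specX.1.subset_unitSq
        have h2 : unitSq \ (unitSq \ smallestCanSq P) = smallestCanSq P :=
          Set.diff_diff_cancel_left specP.1.subset_unitSq
        rw [← h1, ← h2, hfU]
      have h1 : smallestCanSq X ⊆ smallestCanSq S :=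
        specX.2.2 _ specS.1 (hXS.trans specS.2.1)
      have h2 : smallestCanSq S ⊆ smallestCanSq P :=
        specS.2.2 _ specP.1 (hSP.trans specP.2.1)
      have hsqSP : smallestCanSq S = smallestCanSq P :=
        Set.Subset.antisymm h2 (hsqXP ▸ h1)
      exact Or.inr (Or.inl ⟨hXS2, hsqSP ▸ hPne, by rw [hsqSP]⟩)
    · -- X(iii): impossible
      exfalso
      have hq'ne : q' ≠ unitSq := hquadX.ne_unitSq
      obtain ⟨kP, hsqPside⟩ := specP.1
      obtain ⟨kq', hσ'side, hq'side, hq'sub⟩ := hquadX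
      have hsqPsub : smallestCanSq P ⊆ unitSq := specP.1.subset_unitSq
      rcases hcaseX with ⟨hX1, hfq⟩ | ⟨hX2, hXne, hfq⟩
      · -- U \ sq(P) = q', a canonical square
        exact annulus_ne_can isCanSqSide_unitSq hsqPside hsqPsub hPne hq'side hfq
      · -- U \ sq(P) = q' \ sq(X ∩ q')
        have hXq'fin : (X ∩ q').Finite := hXfin.inter_of_left _
        have hXq'U : X ∩ q' ⊆ unitSq := (Set.inter_subset_left).trans hXU
        have specXq' := smallestCanSq_spec hXq'fin hXq'U hX2
        obtain ⟨kτ, hτside⟩ := specXq'.1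
        have hτsub : smallestCanSq (X ∩ q') ⊆ q' :=
          specXq'.2.2 _ ⟨_, hq'side⟩ Set.inter_subset_right
        have hUq' := (annulus_inj isCanSqSide_unitSq hsqPside hsqPsub hPne
          hq'side hτside hτsub hXne hfq).1
        exact hq'ne hUq'.symm
  · -- Case P(iii): critical square σ, quadrant q
    have hqU : q ⊆ unitSq := by
      obtain ⟨k, -, hqside, -⟩ := hquad
      exact hqside.subset_unitSq
    have hqne : q ≠ unitSq := hquad.ne_unitSq
    obtain ⟨kq0, hσside0, hqside0, hqsub0⟩ := hquad
    rcases hcase with ⟨hP1, hf⟩ | ⟨hP2, hPne, hf⟩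
    · -- Sub 3a: f = q, |P ∩ q| ≤ 1
      rw [hf] at hfX ⊢
      rcases hfX with ⟨hX1, hfU⟩ | ⟨hX2, hXne, hfU⟩ | ⟨σ', q', hcritX, hquadX, hcaseX⟩
      · -- X(i): q = U, impossible
        exact absurd hfU hqne
      · -- X(ii): U \ sq(X) = q, impossible
        exfalso
        have specX := smallestCanSq_spec hXfin hXU hX2
        obtain ⟨kX, hsqXside⟩ := specX.1
        exact annulus_ne_can isCanSqSide_unitSq hsqXside specX.1.subset_unitSq hXne
          hqside0 hfU.symm
      · -- X(iii)
        rcases hcaseX with ⟨hX1, hfq⟩ | ⟨hX2, hXne, hfq⟩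
        · -- q = q'
          have hqq' : q' = q := hfq.symm
          subst hqq'
          have hσσ' : σ' = σ :=
            IsQuadrantOf.sigma_unique hquadX ⟨kq0, hσside0, hqside0, hqsub0⟩
          rw [hσσ'] at hcritX
          refine Or.inr (Or.inr ⟨σ, q', hcritX.mono hXS, ⟨kq0, hσside0, hqside0, hqsub0⟩,
            Or.inl ⟨?_, rfl⟩⟩)
          exact le_trans (Set.ncard_le_ncard (Set.inter_subset_inter_left q' hSP)
            (hPfin.inter_of_left q')) hP1
        · -- q = q' \ sq(X ∩ q'), annulus = square: impossible
          exfalso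
          obtain ⟨kq', hσ'side, hq'side, hq'sub⟩ := hquadX
          have hXq'fin : (X ∩ q').Finite := hXfin.inter_of_left _
          have hXq'U : X ∩ q' ⊆ unitSq := (Set.inter_subset_left).trans hXU
          have specXq' := smallestCanSq_spec hXq'fin hXq'U hX2
          obtain ⟨kτ, hτside⟩ := specXq'.1
          have hτsub : smallestCanSq (X ∩ q') ⊆ q' :=
            specXq'.2.2 _ ⟨_, hq'side⟩ Set.inter_subset_right
          exact annulus_ne_can hq'side hτside hτsub hXne hqside0 hfq.symm
    · -- Sub 3b: f = q \ sq(P ∩ q), |P ∩ q| ≥ 2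
      rw [hf] at hfX ⊢
      have hPqfin : (P ∩ q).Finite := hPfin.inter_of_left _
      have hPqU : P ∩ q ⊆ unitSq := (Set.inter_subset_left).trans hPU
      have specPq := smallestCanSq_spec hPqfin hPqU hP2
      obtain ⟨kPq, hsqPqside⟩ := specPq.1
      have hsqPqsub : smallestCanSq (P ∩ q) ⊆ q :=
        specPq.2.2 _ ⟨_, hqside0⟩ Set.inter_subset_right
      rcases hfX with ⟨hX1, hfU⟩ | ⟨hX2, hXne, hfU⟩ | ⟨σ', q', hcritX, hquadX, hcaseX⟩
      · -- X(i): q \ sq(P∩q) = U, so q = U, impossible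
        exfalso
        apply hqne
        refine Set.Subset.antisymm hqU ?_
        rw [← hfU]
        exact Set.diff_subset
      · -- X(ii): U \ sq(X) = q \ sq(P∩q), so U = q by annulus_inj, impossible
        exfalso
        have specX := smallestCanSq_spec hXfin hXU hX2
        obtain ⟨kX, hsqXside⟩ := specX.1
        have hUq := (annulus_inj isCanSqSide_unitSq hsqXside specX.1.subset_unitSq hXne
          hqside0 hsqPqside hsqPqsub hPne hfU.symm).1
        exact hqne hUq.symm
      · -- X(iii)
        rcases hcaseX with ⟨hX1, hfq⟩ | ⟨hX2, hXne', hfq⟩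
        · -- q \ sq(P∩q) = q', annulus = square: impossible
          exfalso
          obtain ⟨kq', hσ'side, hq'side, hq'sub⟩ := hquadX
          exact annulus_ne_can hqside0 hsqPqside hsqPqsub hPne hq'side hfq
        · -- both annuli: q' = q and sq(X∩q') = sq(P∩q)
          obtain ⟨kq', hσ'side, hq'side, hq'sub⟩ := hquadX
          have hXq'fin : (X ∩ q').Finite := hXfin.inter_of_left _
          have hXq'U : X ∩ q' ⊆ unitSq := (Set.inter_subset_left).trans hXU
          have specXq' := smallestCanSq_spec hXq'fin hXq'U hX2
          obtain ⟨kτ, hτside⟩ := specXq'.1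
          have hτsub : smallestCanSq (X ∩ q') ⊆ q' :=
            specXq'.2.2 _ ⟨_, hq'side⟩ Set.inter_subset_right
          obtain ⟨hq'q, hττ'⟩ := annulus_inj hq'side hτside hτsub hXne'
            hqside0 hsqPqside hsqPqsub hPne hfq.symm
          subst hq'q
          -- the quadrant q' has been identified with q (q was eliminated, kept name q')
          have hσσ' : σ' = σ :=
            IsQuadrantOf.sigma_unique ⟨kq', hσ'side, hq'side, hq'sub⟩
              ⟨kq0, hσside0, hqside0, hqsub0⟩
          rw [hσσ'] at hcritX
          -- squeeze for S ∩ q'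
          have hSq'fin : (S ∩ q').Finite := hSfin.inter_of_left _
          have hSq'U : S ∩ q' ⊆ unitSq := (Set.inter_subset_left).trans hSU
          have hS2 : 2 ≤ (S ∩ q').ncard :=
            hX2.trans (Set.ncard_le_ncard (Set.inter_subset_inter_left q' hXS) hSq'fin)
          have specSq' := smallestCanSq_spec hSq'fin hSq'U hS2
          have h1 : smallestCanSq (X ∩ q') ⊆ smallestCanSq (S ∩ q') :=
            specXq'.2.2 _ specSq'.1 ((Set.inter_subset_inter_left q' hXS).trans specSq'.2.1)
          have h2 : smallestCanSq (S ∩ q') ⊆ smallestCanSq (P ∩ q') :=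
            specSq'.2.2 _ specPq.1 ((Set.inter_subset_inter_left q' hSP).trans specPq.2.1)
          have hsqS : smallestCanSq (S ∩ q') = smallestCanSq (P ∩ q') :=
            Set.Subset.antisymm h2 (hττ' ▸ h1)
          refine Or.inr (Or.inr ⟨σ, q', hcritX.mono hXS, ⟨kq0, hσside0, hqside0, hqsub0⟩,
            Or.inr ⟨hS2, ?_, ?_⟩⟩)
          · rw [hsqS]; exact hPne
          · rw [hsqS]
end

section
/- (Locality of insertion.) Let P ⊆ U be finite and let p ∈ U \ P. Every tile f of QT(P) with p ∉ f is also a tile of QT(P ∪ {p}); equivalently, the only tile of QT(P) that can fail to be a tile of QT(P ∪ {p}) is the unique tile of QT(P) containing p. -/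
open scoped Classical

lemma IsSmallestCanSq.unique_s12 {S σ τ : Set (ℝ × ℝ)} (h1 : IsSmallestCanSq S σ)
    (h2 : IsSmallestCanSq S τ) : σ = τ :=
  Set.Subset.antisymm (h1.2.2 τ h2.1 h2.2.1) (h2.2.2 σ h1.1 h1.2.1)

lemma smallestCanSq_eq {S σ : Set (ℝ × ℝ)} (h : IsSmallestCanSq S σ) :
    smallestCanSq S = σ := by
  have he : ∃ σ, IsSmallestCanSq S σ := ⟨σ, h⟩
  rw [smallestCanSq, dif_pos he]
  exact he.choose_spec.unique_s12 h

lemma smallestCanSq_empty {S : Set (ℝ × ℝ)}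
    (h : ¬ ∃ σ, IsSmallestCanSq S σ) : smallestCanSq S = ∅ := by
  rw [smallestCanSq, dif_neg h]

lemma IsSmallestCanSq.insert {S σ : Set (ℝ × ℝ)} {p : ℝ × ℝ}
    (h : IsSmallestCanSq S σ) (hp : p ∈ σ) : IsSmallestCanSq (S ∪ {p}) σ :=
  ⟨h.1, Set.union_subset h.2.1 (Set.singleton_subset_iff.2 hp),
   fun τ hτ hSτ => h.2.2 τ hτ (Set.union_subset_iff.1 hSτ).1⟩

lemma Critical.mono_s12 {P P' σ : Set (ℝ × ℝ)} (hPP : P ⊆ P') (h : Critical P σ) :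
    Critical P' σ := by
  obtain ⟨hc, q1, q2, hq1, hq2, hne, ⟨x, hx⟩, ⟨y, hy⟩⟩ := h
  exact ⟨hc, q1, q2, hq1, hq2, hne, ⟨x, hPP hx.1, hx.2⟩, ⟨y, hPP hy.1, hy.2⟩⟩

/-- Locality of insertion: every tile `f` of `QT(P)` with `p ∉ f` is also a tile
of `QT(P ∪ {p})`. -/
theorem QT_insert_local (P : Set (ℝ × ℝ)) (hfin : P.Finite) (hPU : P ⊆ unitSq)
    (p : ℝ × ℝ) (hp : p ∈ unitSq \ P) (f : Set (ℝ × ℝ))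
    (hf : f ∈ QT P) (hpf : p ∉ f) :
    f ∈ QT (P ∪ {p}) := by
  have hfin' : (P ∪ {p}).Finite := hfin.union (Set.finite_singleton p)
  rcases hf with ⟨h1, rfl⟩ | ⟨h2, hne, rfl⟩ | ⟨σ, q, hcrit, hquad, hsub⟩
  · exact absurd hp.1 hpf
  · -- annulus case
    have hps : p ∈ smallestCanSq P := by
      by_contra h; exact hpf ⟨hp.1, h⟩
    by_cases he : ∃ σ, IsSmallestCanSq P σ
    · obtain ⟨σ, hσ⟩ := he
      have hsq : smallestCanSq P = σ := smallestCanSq_eq hσ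
      have hsq' : smallestCanSq (P ∪ {p}) = σ :=
        smallestCanSq_eq (hσ.insert (hsq ▸ hps))
      refine Or.inr (Or.inl ⟨le_trans h2 (Set.ncard_le_ncard Set.subset_union_left hfin'), ?_, ?_⟩)
      · rw [hsq']; rw [hsq] at hne; exact hne
      · rw [hsq', hsq]
    · rw [smallestCanSq_empty he] at hps; exact absurd hps (Set.notMem_empty p)
  · have hcrit' : Critical (P ∪ {p}) σ := hcrit.mono_s12 Set.subset_union_left
    by_cases hpq : p ∈ q
    · -- p is in q; then we must be in the annulus subcase
      rcases hsub with ⟨hle, rfl⟩ | ⟨h2, hne, rfl⟩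
      · exact absurd hpq hpf
      · have hps : p ∈ smallestCanSq (P ∩ q) := by
          by_contra h; exact hpf ⟨hpq, h⟩
        have hPq : (P ∪ {p}) ∩ q = (P ∩ q) ∪ {p} := by
          ext x
          simp only [Set.mem_inter_iff, Set.mem_union, Set.mem_singleton_iff]
          constructor
          · rintro ⟨hx | rfl, hxq⟩
            · exact Or.inl ⟨hx, hxq⟩
            · exact Or.inr rfl
          · rintro (⟨hx, hxq⟩ | rfl)
            · exact ⟨Or.inl hx, hxq⟩
            · exact ⟨Or.inr rfl, hpq⟩
        by_cases he : ∃ σ, IsSmallestCanSq (P ∩ q) σ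
        · obtain ⟨τ, hτ⟩ := he
          have hsq : smallestCanSq (P ∩ q) = τ := smallestCanSq_eq hτ
          have hsq' : smallestCanSq ((P ∪ {p}) ∩ q) = τ := by
            rw [hPq]; exact smallestCanSq_eq (hτ.insert (hsq ▸ hps))
          refine Or.inr (Or.inr ⟨σ, q, hcrit', hquad, Or.inr ⟨?_, ?_, ?_⟩⟩)
          · refine le_trans h2 (Set.ncard_le_ncard ?_ (hfin'.inter_of_left q))
            exact Set.inter_subset_inter_left q Set.subset_union_left
          · rw [hsq']; rw [hsq] at hne; exact hne
          · rw [hsq', hsq]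
        · rw [smallestCanSq_empty he] at hps; exact absurd hps (Set.notMem_empty p)
    · -- p not in q: intersection unchanged
      have hPq : (P ∪ {p}) ∩ q = P ∩ q := by
        ext x
        simp only [Set.mem_inter_iff, Set.mem_union, Set.mem_singleton_iff]
        constructor
        · rintro ⟨hx | rfl, hxq⟩
          · exact ⟨hx, hxq⟩
          · exact absurd hxq hpq
        · rintro ⟨hx, hxq⟩; exact ⟨Or.inl hx, hxq⟩
      exact Or.inr (Or.inr ⟨σ, q, hcrit', hquad, hPq ▸ hsub⟩)
end
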